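/- Let g ∈ W^r_∞([0,1]) with ‖g^(r)‖_∞ ≤ M, and suppose g has r distinct zeros in the interval [1/2−δ, 1/2+δ] for some δ ∈ (0,1/2]. Then ‖g‖_∞ ≤ M(1+2δ)^r/(2^r · r!). -/

import Mathlib

open Set Polynomial

private lemma rolle_iter : ∀ (n : ℕ) (F : ℕ → ℝ → ℝ)
    (_hF : ∀ k < n, ∀ x ∈ Set.Icc (0:ℝ) 1,
      HasDerivWithinAt (F k) (F (k+1) x) (Set.Icc (0:ℝ) 1) x)
    (z : Fin (n+2) → ℝ) (_hmono : StrictMono z) (_hz : ∀ i, z i ∈ Set.Icc (0:ℝ) 1)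
    (_h0 : ∀ i, F 0 (z i) = 0),
    ∃ a b : ℝ, a ∈ Set.Icc (0:ℝ) 1 ∧ b ∈ Set.Icc (0:ℝ) 1 ∧ a < b ∧ F n a = 0 ∧ F n b = 0 := by
  intro n
  induction n with
  | zero =>
    intro F _ z hmono hz h0
    exact ⟨z 0, z 1, hz 0, hz 1, hmono (by norm_num), h0 0, h0 1⟩
  | succ n IH =>
    intro F hF z hmono hz h0
    have cont : ContinuousOn (F 0) (Set.Icc 0 1) :=
      fun x hx => (hF 0 (by omega) x hx).continuousWithinAt
    have key : ∀ i : Fin (n+2), ∃ w, w ∈ Set.Ioo (z i.castSucc) (z i.succ) ∧ F 1 w = 0 := by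
      intro i
      have hab : z i.castSucc < z i.succ := hmono Fin.castSucc_lt_succ
      have hsub : Set.Icc (z i.castSucc) (z i.succ) ⊆ Set.Icc 0 1 :=
        Set.Icc_subset_Icc (hz _).1 (hz _).2
      obtain ⟨c, hc, hc0⟩ := exists_hasDerivAt_eq_zero hab (cont.mono hsub)
        (by rw [h0, h0])
        (fun x hx => by
          have hx01 : x ∈ Set.Ioo (0:ℝ) 1 :=
            ⟨lt_of_le_of_lt (hz i.castSucc).1 hx.1, lt_of_lt_of_le hx.2 (hz i.succ).2⟩
          exact (hF 0 (by omega) x (Set.Ioo_subset_Icc_self hx01)).hasDerivAt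
            (Icc_mem_nhds hx01.1 hx01.2))
      exact ⟨c, hc, hc0⟩
    choose w hw hw0 using key
    have hwmono : StrictMono w := by
      rw [Fin.strictMono_iff_lt_succ]
      intro i
      calc w i.castSucc < z i.castSucc.succ := (hw i.castSucc).2
        _ = z i.succ.castSucc := by rw [Fin.succ_castSucc]
        _ < w i.succ := (hw i.succ).1
    exact IH (fun k => F (k+1)) (fun k hk x hx => hF (k+1) (by omega) x hx) w hwmono
      (fun i => ⟨le_of_lt (lt_of_le_of_lt (hz i.castSucc).1 (hw i).1),
        le_of_lt (lt_of_lt_of_le (hw i).2 (hz i.succ).2)⟩)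
      hw0

/-- If `g ∈ W^r_∞([0,1])` with `‖g^{(r)}‖_∞ ≤ M` (encoded by: `g` has pointwise
derivatives `D 1, ..., D (r-1)` on `[0,1]` and `D (r-1)` is `M`-Lipschitz there)
and `g` has `r` distinct zeros in `[1/2-δ, 1/2+δ]` for some `δ ∈ (0,1/2]`, then
`‖g‖_∞ ≤ M (1+2δ)^r / (2^r r!)`. -/
theorem stmt_7 (r : ℕ) (hr : 1 ≤ r) (M : ℝ) (hM : 0 ≤ M) (δ : ℝ) (hδ0 : 0 < δ)
    (hδ1 : δ ≤ 1 / 2)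
    (g : ℝ → ℝ) (D : ℕ → ℝ → ℝ) (hD0 : D 0 = g)
    (hderiv : ∀ k, k < r - 1 → ∀ x ∈ Set.Icc (0 : ℝ) 1,
      HasDerivWithinAt (D k) (D (k + 1) x) (Set.Icc (0 : ℝ) 1) x)
    (hlip : LipschitzOnWith (Real.toNNReal M) (D (r - 1)) (Set.Icc (0 : ℝ) 1))
    (x : Fin r → ℝ) (hx : ∀ i, x i ∈ Set.Icc (1 / 2 - δ) (1 / 2 + δ))
    (hinj : Function.Injective x) (hzero : ∀ i, g (x i) = 0) :
    ∀ y ∈ Set.Icc (0 : ℝ) 1, |g y| ≤ M * (1 + 2 * δ) ^ r / (2 ^ r * Nat.factorial r) := by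
  obtain ⟨m, rfl⟩ : ∃ m, r = m + 1 := ⟨r - 1, by omega⟩
  intro y hy
  have hRHSpos : (0:ℝ) < 2 ^ (m+1) * (Nat.factorial (m+1) : ℝ) := by positivity
  have hfacpos : (0:ℝ) < (Nat.factorial (m+1) : ℝ) := by positivity
  set p : Polynomial ℝ := ∏ i : Fin (m+1), (X - C (x i)) with hp
  have hpeval : ∀ t, p.eval t = ∏ i : Fin (m+1), (t - x i) := by
    intro t; simp [hp, eval_prod]
  by_cases hyx : ∃ i, y = x i
  · obtain ⟨i, rfl⟩ := hyx
    rw [hzero i]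
    simp only [abs_zero]
    positivity
  push_neg at hyx
  have hpy : p.eval y ≠ 0 := by
    rw [hpeval]
    exact Finset.prod_ne_zero_iff.2 (fun i _ => sub_ne_zero.2 (hyx i))
  set c : ℝ := g y / p.eval y with hc
  have hgy : g y = c * p.eval y := by rw [hc, div_mul_cancel₀ _ hpy]
  -- the finset of zeros
  have hxmem01 : ∀ i, x i ∈ Set.Icc (0:ℝ) 1 := by
    intro i
    obtain ⟨h1, h2⟩ := hx i
    constructor <;> linarith
  set s : Finset ℝ := insert y (Finset.univ.image x) with hs
  have hcard : s.card = m + 2 := by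
    rw [hs, Finset.card_insert_of_notMem (by
      simp only [Finset.mem_image, Finset.mem_univ, true_and]
      rintro ⟨i, hi⟩; exact hyx i hi.symm),
      Finset.card_image_of_injective _ hinj, Finset.card_univ, Fintype.card_fin]
  set z : Fin (m+2) → ℝ := fun i => s.orderEmbOfFin hcard i with hz
  set F : ℕ → ℝ → ℝ := fun k t => D k t - c * (derivative^[k] p).eval t with hF
  have hFzero : ∀ i, F 0 (z i) = 0 := by
    intro i
    have hmem : z i ∈ s := s.orderEmbOfFin_mem hcard i
    rw [hs, Finset.mem_insert] at hmem
    simp only [hF, Function.iterate_zero_apply, hD0]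
    rcases hmem with h | h
    · rw [h]; rw [hgy]; ring
    · simp only [Finset.mem_image, Finset.mem_univ, true_and] at h
      obtain ⟨i', hi'⟩ := h
      rw [← hi', hzero i', hpeval, Finset.prod_eq_zero (Finset.mem_univ i') (by ring)]
      ring
  have hzmem : ∀ i, z i ∈ Set.Icc (0:ℝ) 1 := by
    intro i
    have hmem : z i ∈ s := s.orderEmbOfFin_mem hcard i
    rw [hs, Finset.mem_insert] at hmem
    rcases hmem with h | h
    · rw [h]; exact hy
    · simp only [Finset.mem_image, Finset.mem_univ, true_and] at h
      obtain ⟨i', hi'⟩ := h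
      rw [← hi']
      exact hxmem01 i'
  have hFderiv : ∀ k < m, ∀ t ∈ Set.Icc (0:ℝ) 1,
      HasDerivWithinAt (F k) (F (k+1) t) (Set.Icc (0:ℝ) 1) t := by
    intro k hk t ht
    have h1 : HasDerivWithinAt (D k) (D (k+1) t) (Set.Icc (0:ℝ) 1) t :=
      hderiv k (by omega) t ht
    have h2 : HasDerivAt (fun u => (derivative^[k] p).eval u)
        ((derivative^[k+1] p).eval t) t := by
      rw [Function.iterate_succ_apply']
      exact Polynomial.hasDerivAt _ t
    exact h1.sub ((h2.hasDerivWithinAt).const_mul c)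
  obtain ⟨a, b, ha, hb, hab, hFa, hFb⟩ := rolle_iter m F hFderiv z
    (fun i j hij => (s.orderEmbOfFin hcard).strictMono hij) hzmem hFzero
  -- relation via Lipschitz
  set q : Polynomial ℝ := derivative^[m] p with hq
  have hDa : D m a = c * q.eval a := by
    have := hFa; simp only [hF] at this; linarith
  have hDb : D m b = c * q.eval b := by
    have := hFb; simp only [hF] at this; linarith
  -- degree facts
  have hpdeg : p.natDegree = m + 1 := by
    rw [hp, natDegree_prod _ _ (fun i _ => X_sub_C_ne_zero (x i))]
    simp [natDegree_X_sub_C]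
  have hpmonic : p.Monic := monic_prod_of_monic _ _ (fun i _ => monic_X_sub_C (x i))
  have hqdeg : q.degree ≤ 1 := by
    have h1 : q.natDegree ≤ 1 := by
      calc q.natDegree ≤ p.natDegree - m := natDegree_iterate_derivative p m
        _ = 1 := by omega
    have := Polynomial.natDegree_le_iff_degree_le.mp h1
    exact_mod_cast this
  have hqcoeff : q.coeff 1 = (Nat.factorial (m+1) : ℝ) := by
    rw [hq, coeff_iterate_derivative]
    have h1 : (1 + m : ℕ) = m + 1 := by omega
    rw [h1, ← hpdeg, hpmonic.coeff_natDegree, hpdeg]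
    have h2 := Nat.descFactorial_self (m+1)
    rw [Nat.descFactorial_succ, show m+1-m = 1 from by omega, one_mul] at h2
    rw [h2]; simp
  have hqeval : ∀ t, q.eval t = q.coeff 1 * t + q.coeff 0 := by
    intro t
    conv_lhs => rw [eq_X_add_C_of_degree_le_one hqdeg]
    simp
  have hqdiff : q.eval b - q.eval a = (Nat.factorial (m+1) : ℝ) * (b - a) := by
    rw [hqeval, hqeval, hqcoeff]; ring
  have hlipab := hlip.dist_le_mul a ha b hb
  have hMcoe : (M.toNNReal : ℝ) = M := Real.coe_toNNReal M hM
  simp only [Nat.add_sub_cancel] at hlipab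
  rw [Real.dist_eq, Real.dist_eq, hDa, hDb, hMcoe] at hlipab
  have hkey : |c| * ((Nat.factorial (m+1) : ℝ) * (b - a)) ≤ M * (b - a) := by
    calc |c| * ((Nat.factorial (m+1) : ℝ) * (b - a)) = |c * q.eval a - c * q.eval b| := by
          rw [← mul_sub, abs_mul]
          congr 1
          rw [abs_of_nonpos (by nlinarith [hqdiff])]
          linarith [hqdiff]
      _ ≤ M * |a - b| := hlipab
      _ = M * (b - a) := by rw [abs_of_nonpos (by linarith)]; ring
  have hc_le : |c| ≤ M / (Nat.factorial (m+1) : ℝ) := by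
    rw [le_div_iff₀ hfacpos]
    have hba : 0 < b - a := by linarith
    nlinarith
  -- bound on |p.eval y|
  have hpy_le : |p.eval y| ≤ (1/2 + δ) ^ (m+1) := by
    rw [hpeval, Finset.abs_prod]
    calc ∏ i : Fin (m+1), |y - x i| ≤ ∏ i : Fin (m+1), (1/2 + δ) := by
          apply Finset.prod_le_prod (fun i _ => abs_nonneg _)
          intro i _
          rw [abs_le]
          obtain ⟨hx1, hx2⟩ := hx i
          obtain ⟨hy1, hy2⟩ := hy
          constructor <;> linarith
      _ = (1/2 + δ) ^ (m+1) := by rw [Finset.prod_const, Finset.card_univ, Fintype.card_fin]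
  have hhalf : (0:ℝ) ≤ 1/2 + δ := by linarith
  calc |g y| = |c| * |p.eval y| := by rw [hgy, abs_mul]
    _ ≤ (M / (Nat.factorial (m+1) : ℝ)) * (1/2 + δ) ^ (m+1) :=
        mul_le_mul hc_le hpy_le (abs_nonneg _) (by positivity)
    _ = M * (1 + 2 * δ) ^ (m+1) / (2 ^ (m+1) * Nat.factorial (m+1)) := by
        have : (1/2 + δ : ℝ) = (1 + 2*δ) / 2 := by ring
        rw [this, div_pow, div_mul_div_comm, mul_comm ((Nat.factorial (m+1) : ℝ))]
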